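/- Let c̃₀ be a constant with 0 < c̃₀² < 1, c̃₀ ≠ 0, and let f satisfy f''(u) - (2c̃₀/(c̃₀²-1)) f'(u)² + 2c̃₀ = 0 on an open interval. Then f(u) = ((1-c̃₀²)/(2c̃₀)) ln |cos((2c̃₀/√(1-c̃₀²)) u - ã)| + b̃ for some constants ã, b̃. -/

import Mathlib

private lemma const_of_hasDerivAt_zero {s : Set ℝ} (hs : Convex ℝ s) (ho : IsOpen s)
    (φ : ℝ → ℝ) (hφ : ∀ x ∈ s, HasDerivAt φ 0 x) {x y : ℝ} (hx : x ∈ s) (hy : y ∈ s) :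
    φ x = φ y := by
  apply hs.is_const_of_fderivWithin_eq_zero
    (fun z hz => ((hφ z hz).differentiableAt).differentiableWithinAt) _ hx hy
  intro z hz
  rw [fderivWithin_of_isOpen ho hz]
  have h0 : HasFDerivAt φ (0 : ℝ →L[ℝ] ℝ) z := by
    exact (hφ z hz).hasFDerivAt.congr_fderiv (by ext; simp)
  exact h0.fderiv

theorem stmt_14 (c₀ α β : ℝ) (hc₀ : c₀ ≠ 0) (hc₀' : c₀ ^ 2 < 1) (f : ℝ → ℝ)
    (hd1 : ∀ u ∈ Set.Ioo α β, DifferentiableAt ℝ f u)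
    (hd2 : ∀ u ∈ Set.Ioo α β, DifferentiableAt ℝ (deriv f) u)
    (hode : ∀ u ∈ Set.Ioo α β,
      deriv (deriv f) u - (2 * c₀ / (c₀ ^ 2 - 1)) * (deriv f u) ^ 2 + 2 * c₀ = 0) :
    ∃ a b : ℝ, ∀ u ∈ Set.Ioo α β,
      f u = ((1 - c₀ ^ 2) / (2 * c₀)) *
          Real.log |Real.cos ((2 * c₀ / Real.sqrt (1 - c₀ ^ 2)) * u - a)| + b := by
  by_cases hne : ∃ u₀, u₀ ∈ Set.Ioo α β
  swap
  · exact ⟨0, 0, fun u hu => absurd ⟨u, hu⟩ hne⟩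
  obtain ⟨u₀, hu₀⟩ := hne
  set s : ℝ := Real.sqrt (1 - c₀ ^ 2) with hs_def
  have h1c : (0:ℝ) < 1 - c₀ ^ 2 := by linarith
  have hspos : 0 < s := Real.sqrt_pos.2 h1c
  have hs2 : s ^ 2 = 1 - c₀ ^ 2 := Real.sq_sqrt h1c.le
  have hsne : s ≠ 0 := ne_of_gt hspos
  set k : ℝ := 2 * c₀ / s with hk_def
  set g : ℝ → ℝ := deriv f with hg_def
  -- derivative of g
  have hg' : ∀ u ∈ Set.Ioo α β, HasDerivAt g (-(2 * c₀ / s ^ 2) * (g u ^ 2 + s ^ 2)) u := by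
    intro u hu
    have h := (hd2 u hu).hasDerivAt
    have he : deriv g u = -(2 * c₀ / s ^ 2) * (g u ^ 2 + s ^ 2) := by
      have := hode u hu
      have hne1 : c₀ ^ 2 - 1 ≠ 0 := by nlinarith
      rw [hs2]
      field_simp at this ⊢
      nlinarith [this]
    rwa [he] at h
  -- arctan(g/s) + k*u is constant
  have hconst : ∀ u ∈ Set.Ioo α β,
      Real.arctan (g u / s) + k * u = Real.arctan (g u₀ / s) + k * u₀ := by
    intro u hu
    refine const_of_hasDerivAt_zero (convex_Ioo α β) isOpen_Ioo (fun y => Real.arctan (g y / s) + k * y) ?_ hu hu₀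
    intro x hx
    have h1 : HasDerivAt (fun y => Real.arctan (g y / s))
        (1 / (1 + (g x / s) ^ 2) * (-(2 * c₀ / s ^ 2) * (g x ^ 2 + s ^ 2) / s)) x := by
      exact (Real.hasDerivAt_arctan (g x / s)).comp x ((hg' x hx).div_const s)
    have h2 : HasDerivAt (fun y => Real.arctan (g y / s) + k * y)
        (1 / (1 + (g x / s) ^ 2) * (-(2 * c₀ / s ^ 2) * (g x ^ 2 + s ^ 2) / s) + k) x := by
      have hlin : HasDerivAt (fun y : ℝ => k * y) k x := by
        simpa using (hasDerivAt_id x).const_mul k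
      exact h1.add hlin
    have hz : 1 / (1 + (g x / s) ^ 2) * (-(2 * c₀ / s ^ 2) * (g x ^ 2 + s ^ 2) / s) + k = 0 := by
      have hpos : 0 < 1 + (g x / s) ^ 2 := by positivity
      rw [hk_def]
      field_simp
      ring
    rwa [hz] at h2
  set a : ℝ := Real.arctan (g u₀ / s) + k * u₀ with ha_def
  -- cos(k*u - a) relation
  have hang : ∀ u ∈ Set.Ioo α β, k * u - a = -Real.arctan (g u / s) := by
    intro u hu
    have := hconst u hu
    linarith
  have hcos_pos : ∀ u ∈ Set.Ioo α β, 0 < Real.cos (k * u - a) := by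
    intro u hu
    rw [hang u hu, Real.cos_neg]
    exact Real.cos_arctan_pos _
  -- F closed form
  set F : ℝ → ℝ := fun u => ((1 - c₀ ^ 2) / (2 * c₀)) * Real.log (Real.cos (k * u - a))
    with hF_def
  have hF' : ∀ u ∈ Set.Ioo α β, HasDerivAt F (g u) u := by
    intro u hu
    have hc : HasDerivAt (fun y => Real.cos (k * y - a)) (-Real.sin (k * u - a) * k) u := by
      have hlin : HasDerivAt (fun y : ℝ => k * y - a) k u := by
        simpa using ((hasDerivAt_id u).const_mul k).sub_const a
      simpa [Function.comp_def] using (Real.hasDerivAt_cos (k * u - a)).comp u hlin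
    have hcne : Real.cos (k * u - a) ≠ 0 := ne_of_gt (hcos_pos u hu)
    have hl : HasDerivAt (fun y => Real.log (Real.cos (k * y - a)))
        (-Real.sin (k * u - a) * k / Real.cos (k * u - a)) u := by
      have := (Real.hasDerivAt_log hcne).comp u hc
      simpa [Function.comp_def, div_eq_inv_mul, mul_comm] using this
    have hF'' := hl.const_mul ((1 - c₀ ^ 2) / (2 * c₀))
    have heq : (1 - c₀ ^ 2) / (2 * c₀) *
        (-Real.sin (k * u - a) * k / Real.cos (k * u - a)) = g u := by
      have hsin : Real.sin (k * u - a) = -(g u / s / Real.sqrt (1 + (g u / s) ^ 2)) := by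
        rw [hang u hu, Real.sin_neg, Real.sin_arctan]
      have hcosv : Real.cos (k * u - a) = 1 / Real.sqrt (1 + (g u / s) ^ 2) := by
        rw [hang u hu, Real.cos_neg, Real.cos_arctan]
      have hsqpos : 0 < Real.sqrt (1 + (g u / s) ^ 2) := by positivity
      rw [hsin, hcosv, hk_def]
      rw [← hs2]
      field_simp
    rw [heq] at hF''
    exact hF''
  -- f - F is constant
  set b : ℝ := f u₀ - F u₀ with hb_def
  refine ⟨a, b, fun u hu => ?_⟩
  have hφ : ∀ x ∈ Set.Ioo α β, HasDerivAt (fun y => f y - F y) 0 x := by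
    intro x hx
    have hf : HasDerivAt f (g x) x := (hd1 x hx).hasDerivAt
    simpa [Pi.sub_def] using hf.sub (hF' x hx)
  have hc := const_of_hasDerivAt_zero (convex_Ioo α β) isOpen_Ioo _ hφ hu hu₀
  have : f u = F u + b := by rw [hb_def]; linarith
  rw [this, hF_def]
  rw [abs_of_pos (hcos_pos u hu)]
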